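/- Any product of I-favorable spaces is I-favorable: if X_α is I-favorable for each α ∈ T, then the product ∏_{α∈T} X_α with the product topology is I-favorable. -/

import Mathlib

open Set TopologicalSpace

variable (X : Type*) [TopologicalSpace X]

/-- A valid move of Player I: a finite family of nonempty open sets. -/
def IMove (A : Set (Set X)) : Prop :=
  A.Finite ∧ ∀ U ∈ A, IsOpen U ∧ U.Nonempty

/-- A valid response of Player II to the family `A`: a finite family of nonempty
open sets such that every member of `A` contains some member of `B`. -/
def IIMove (A B : Set (Set X)) : Prop :=
  IMove X B ∧ ∀ U ∈ A, ∃ V ∈ B, V ⊆ U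

/-- `X` is I-favorable: Player I has a winning strategy in the finite open-open
game. A strategy is a function from histories of Player II's moves to the next
move of Player I; it is winning if for every play in which Player II always
responds validly, each tail union of Player II's families is dense. -/
def IFavorable : Prop :=
  ∃ σ : List (Set (Set X)) → Set (Set X),
    (∀ hist, IMove X (σ hist)) ∧
    ∀ B : ℕ → Set (Set X),
      (∀ n, IIMove X (σ ((List.range n).map B)) (B n)) →
      ∀ k, Dense (⋃ (n : ℕ) (_ : k ≤ n), ⋃₀ B n)

/-- Player II has a winning strategy in the finite open-open game: a function
from histories of Player I's moves to responses of Player II which are valid,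
and such that whenever Player I plays validly, some tail union of Player II's
families fails to be dense. -/
def IIFavorable : Prop :=
  ∃ τ : List (Set (Set X)) → Set (Set X),
    ∀ A : ℕ → Set (Set X), (∀ n, IMove X (A n)) →
      (∀ n, IIMove X (A n) (τ ((List.range (n + 1)).map A))) ∧
      ∃ k, ¬ Dense (⋃ (n : ℕ) (_ : k ≤ n), ⋃₀ τ ((List.range (n + 1)).map A))

/-- `Q` is a π-base for `X`: a family of nonempty open sets such that every
nonempty open set contains a member of the family. -/
def IsPiBase (Q : Set (Set X)) : Prop :=
  (∀ U ∈ Q, IsOpen U ∧ U.Nonempty) ∧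
  ∀ V : Set X, IsOpen V → V.Nonempty → ∃ U ∈ Q, U ⊆ V

/-- `C` is a club filter with respect to the π-base `Q`. -/
def IsClubFilter (Q : Set (Set X)) (C : Set (Set (Set X))) : Prop :=
  (∀ P ∈ C, P.Countable ∧ P ⊆ Q) ∧
  (∀ P : ℕ → Set (Set X), (∀ n, P n ∈ C) → Monotone P → (⋃ n, P n) ∈ C) ∧
  (∀ A : Set (Set X), A.Countable → A ⊆ Q → ∃ P ∈ C, A ⊆ P) ∧
  (∀ V : Set X, IsOpen V → V.Nonempty →
    ∀ P ∈ C, ∃ W ∈ P, ∀ U ∈ P, U ⊆ W → (U ∩ V).Nonempty)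


open Function

section Single

variable {Y : Type*} [TopologicalSpace Y]

/-- A family of nonempty open sets containing `univ` and closed under the strategy `σ`. -/
def SClosed (σ : List (Set (Set Y)) → Set (Set Y)) (P : Set (Set Y)) : Prop :=
  (∀ U ∈ P, IsOpen U ∧ U.Nonempty) ∧ univ ∈ P ∧
    ∀ l : List (Set (Set Y)), (∀ b ∈ l, b.Finite ∧ b ⊆ P) → σ l ⊆ P

lemma monotone_absorb {α : Type*} {F : ℕ → Set α} (hm : Monotone F) {b : Set α}
    (hb : b.Finite) (h : b ⊆ ⋃ n, F n) : ∃ n, b ⊆ F n := by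
  obtain ⟨I, Ifin, hI⟩ := Set.finite_subset_iUnion hb h
  refine ⟨Ifin.toFinset.sup id, hI.trans ?_⟩
  refine Set.iUnion₂_subset fun i hi => hm ?_
  exact Finset.le_sup (f := id) (Ifin.mem_toFinset.mpr hi)

lemma sClosed_iUnion {σ : List (Set (Set Y)) → Set (Set Y)} {P : ℕ → Set (Set Y)}
    (hm : Monotone P) (h : ∀ n, SClosed σ (P n)) : SClosed σ (⋃ n, P n) := by
  refine ⟨?_, ?_, ?_⟩
  · rintro U hU
    rcases mem_iUnion.1 hU with ⟨n, hn⟩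
    exact (h n).1 U hn
  · exact mem_iUnion.2 ⟨0, (h 0).2.1⟩
  · intro l hl
    have : ∃ n, ∀ b ∈ l, b.Finite ∧ b ⊆ P n := by
      induction l with
      | nil => exact ⟨0, by simp⟩
      | cons a l ih =>
        obtain ⟨n, hn⟩ := ih (fun b hb => hl b (List.mem_cons_of_mem _ hb))
        obtain ⟨hfin, hsub⟩ := hl a List.mem_cons_self
        obtain ⟨m, hmsub⟩ := monotone_absorb hm hfin hsub
        refine ⟨max n m, fun b hb => ?_⟩
        rcases List.mem_cons.1 hb with rfl | hb
        · exact ⟨hfin, hmsub.trans (hm (le_max_right _ _))⟩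
        · exact ⟨(hn b hb).1, (hn b hb).2.trans (hm (le_max_left _ _))⟩
    obtain ⟨n, hn⟩ := this
    exact ((h n).2.2 l hn).trans (subset_iUnion P n)

lemma countable_lists {P : Set (Set Y)} (hP : P.Countable) :
    {l : List (Set (Set Y)) | ∀ b ∈ l, b.Finite ∧ b ⊆ P}.Countable := by
  have hS : {t : Set (Set Y) | t.Finite ∧ t ⊆ P}.Countable :=
    Set.countable_setOf_finite_subset hP
  have : Countable {t : Set (Set Y) // t.Finite ∧ t ⊆ P} := hS.to_subtype
  have : {l : List (Set (Set Y)) | ∀ b ∈ l, b.Finite ∧ b ⊆ P} ⊆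
      Set.range (fun l : List {t : Set (Set Y) // t.Finite ∧ t ⊆ P} => l.map Subtype.val) := by
    intro l hl
    refine ⟨l.attach.map fun b => ⟨b.1, hl b.1 b.2⟩, ?_⟩
    simp [List.map_map, Function.comp]
  exact (Set.countable_range _).mono this

/-- Closure of a countable family under a strategy. -/
lemma exists_sClosed [Nonempty Y] (σ : List (Set (Set Y)) → Set (Set Y))
    (hmove : ∀ hist, IMove Y (σ hist)) {P₀ : Set (Set Y)} (hc : P₀.Countable)
    (hop : ∀ U ∈ P₀, IsOpen U ∧ U.Nonempty) :
    ∃ P, P₀ ⊆ P ∧ P.Countable ∧ SClosed σ P := by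
  let G : Set (Set Y) → Set (Set Y) := fun P =>
    P ∪ {univ} ∪ ⋃ l ∈ {l : List (Set (Set Y)) | ∀ b ∈ l, b.Finite ∧ b ⊆ P}, σ l
  have hGsub : ∀ P, P ⊆ G P := fun P => subset_union_left.trans subset_union_left
  have hGc : ∀ P : Set (Set Y), P.Countable → (G P).Countable := by
    intro P hc
    refine ((hc.union (countable_singleton _)).union ?_)
    exact Set.Countable.biUnion (countable_lists hc) fun l _ => (hmove l).1.countable
  have hGop : ∀ P, (∀ U ∈ P, IsOpen U ∧ U.Nonempty) → ∀ U ∈ G P, IsOpen U ∧ U.Nonempty := by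
    intro P hP U hU
    rcases hU with (hU | hU) | hU
    · exact hP U hU
    · rcases hU with rfl; exact ⟨isOpen_univ, univ_nonempty⟩
    · rcases mem_iUnion₂.1 hU with ⟨l, _, hl⟩
      exact (hmove l).2 U hl
  have hmono : Monotone (fun n => G^[n] P₀) := by
    refine monotone_nat_of_le_succ fun n => ?_
    rw [Function.iterate_succ_apply']
    exact hGsub _
  refine ⟨⋃ n, G^[n] P₀, subset_iUnion (fun n => G^[n] P₀) 0, ?_, ?_, ?_, ?_⟩
  · have : ∀ n, (G^[n] P₀).Countable := by
      intro n; induction n with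
      | zero => exact hc
      | succ n ih => rw [Function.iterate_succ_apply']; exact hGc _ ih
    exact Set.countable_iUnion this
  · have : ∀ n, ∀ U ∈ G^[n] P₀, IsOpen U ∧ U.Nonempty := by
      intro n; induction n with
      | zero => exact hop
      | succ n ih => rw [Function.iterate_succ_apply']; exact hGop _ ih
    intro U hU
    rcases mem_iUnion.1 hU with ⟨n, hn⟩
    exact this n U hn
  · refine mem_iUnion.2 ⟨1, ?_⟩
    simp only [Function.iterate_one]
    exact subset_union_left (mem_union_right _ rfl)
  · intro l hl
    have : ∃ n, ∀ b ∈ l, b.Finite ∧ b ⊆ G^[n] P₀ := by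
      induction l with
      | nil => exact ⟨0, by simp⟩
      | cons a l ih =>
        obtain ⟨n, hn⟩ := ih (fun b hb => hl b (List.mem_cons_of_mem _ hb))
        obtain ⟨hfin, hsub⟩ := hl a List.mem_cons_self
        obtain ⟨m, hmsub⟩ := monotone_absorb hmono hfin hsub
        refine ⟨max n m, fun b hb => ?_⟩
        rcases List.mem_cons.1 hb with rfl | hb
        · exact ⟨hfin, hmsub.trans (hmono (le_max_right _ _))⟩
        · exact ⟨(hn b hb).1, (hn b hb).2.trans (hmono (le_max_left _ _))⟩
    obtain ⟨n, hn⟩ := this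
    have : σ l ⊆ G^[n+1] P₀ := by
      rw [Function.iterate_succ_apply']
      refine subset_union_right.trans' ?_
      intro U hU
      exact mem_iUnion₂.2 ⟨l, hn, hU⟩
    exact this.trans (subset_iUnion (fun n => G^[n] P₀) (n+1))

/-- Reflection: a strategy-closed family reflects every nonempty open set. -/
lemma sClosed_reflect {σ : List (Set (Set Y)) → Set (Set Y)}
    (hmove : ∀ hist, IMove Y (σ hist))
    (hwin : ∀ B : ℕ → Set (Set Y),
      (∀ n, IIMove Y (σ ((List.range n).map B)) (B n)) →
      ∀ k, Dense (⋃ (n : ℕ) (_ : k ≤ n), ⋃₀ B n))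
    {P : Set (Set Y)} (hP : SClosed σ P) {V : Set Y} (hV : IsOpen V) (hVne : V.Nonempty) :
    ∃ W ∈ P, ∀ U ∈ P, U ⊆ W → (U ∩ V).Nonempty := by
  by_contra hcon
  push_neg at hcon
  -- for every W ∈ P there is a shrink in P disjoint from V
  have hshrink : ∀ W : Set Y, ∃ U : Set Y, W ∈ P → U ∈ P ∧ U ⊆ W ∧ U ∩ V = ∅ := by
    intro W
    by_cases hW : W ∈ P
    · obtain ⟨U, hU, hsub, hdisj⟩ := hcon W hW
      exact ⟨U, fun _ => ⟨hU, hsub, hdisj⟩⟩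
    · exact ⟨∅, fun h => absurd h hW⟩
  choose f hf using hshrink
  -- history construction
  let resp : List (Set (Set Y)) → Set (Set Y) := fun l => f '' σ l
  let H : ℕ → List (Set (Set Y)) := fun n => Nat.rec [] (fun _ l => l ++ [resp l]) n
  have hHsucc : ∀ n, H (n+1) = H n ++ [resp (H n)] := fun n => rfl
  let B : ℕ → Set (Set Y) := fun n => resp (H n)
  have hhist : ∀ n, (List.range n).map B = H n := by
    intro n
    induction n with
    | zero => rfl
    | succ n ih => rw [List.range_succ, List.map_append, ih]; rfl
  -- everything stays in P
  have hHP : ∀ n, ∀ b ∈ H n, b.Finite ∧ b ⊆ P := by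
    intro n
    induction n with
    | zero => simp [H]
    | succ n ih =>
      rw [hHsucc]
      intro b hb
      rcases List.mem_append.1 hb with hb | hb
      · exact ih b hb
      · rcases List.mem_singleton.1 hb with rfl
        have hσ : σ (H n) ⊆ P := hP.2.2 _ ih
        constructor
        · exact (hmove (H n)).1.image f
        · rintro _ ⟨U, hU, rfl⟩
          exact (hf U (hσ hU)).1
  have hBmove : ∀ n, IIMove Y (σ ((List.range n).map B)) (B n) := by
    intro n
    rw [hhist]
    have hσ : σ (H n) ⊆ P := hP.2.2 _ (hHP n)
    refine ⟨⟨(hmove (H n)).1.image f, ?_⟩, ?_⟩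
    · rintro _ ⟨U, hU, rfl⟩
      exact hP.1 _ (hf U (hσ hU)).1
    · intro U hU
      exact ⟨f U, mem_image_of_mem f hU, (hf U (hσ hU)).2.1⟩
  have hdense := hwin B hBmove 0
  obtain ⟨y, hy1, hy2⟩ := (dense_iff_inter_open.1 hdense) V hV hVne
  rcases mem_iUnion₂.1 hy2 with ⟨n, -, hy3⟩
  rcases hy3 with ⟨U, hU, hyU⟩
  rcases hU with ⟨U', hU', rfl⟩
  have hσ : σ (H n) ⊆ P := hP.2.2 _ (hHP n)
  have : f U' ∩ V = ∅ := (hf U' (hσ hU')).2.2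
  exact absurd (mem_inter hyU hy1) (by rw [this]; exact id)

end Single

/-- Interleaving of two sequences. -/
def il {A : Type*} (u v : ℕ → A) : ℕ → A := fun n => if n % 2 = 0 then u (n / 2) else v (n / 2)

lemma il_even {A : Type*} (u v : ℕ → A) (i : ℕ) : il u v (2 * i) = u i := by
  have h1 : (2 * i) % 2 = 0 := by omega
  have h2 : (2 * i) / 2 = i := by omega
  simp [il, h1, h2]

lemma range_il {A : Type*} (u v : ℕ → A) : range (il u v) = range u ∪ range v := by
  refine subset_antisymm ?_ ?_
  · rintro _ ⟨n, rfl⟩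
    by_cases h : n % 2 = 0
    · exact Or.inl ⟨n / 2, by simp [il, h]⟩
    · exact Or.inr ⟨n / 2, by simp [il, h]⟩
  · rintro x (⟨i, rfl⟩ | ⟨i, rfl⟩)
    · exact ⟨2 * i, il_even u v i⟩
    · refine ⟨2 * i + 1, ?_⟩
      have h1 : (2 * i + 1) % 2 = 1 := by omega
      have h2 : (2 * i + 1) / 2 = i := by omega
      simp [il, h1, h2]


section Product

variable {T : Type*} {Xf : T → Type*} [∀ α, TopologicalSpace (Xf α)]

/-- A basic open box in the product: finitely many nontrivial coordinates,
each coordinate projection open and nonempty, and the set is the product of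
its projections. -/
def IsBox (s : Set (∀ α, Xf α)) : Prop :=
  (∀ α, IsOpen (eval α '' s) ∧ (eval α '' s).Nonempty) ∧
    {α | eval α '' s ≠ univ}.Finite ∧ s = univ.pi fun α => eval α '' s

/-- The trace of a family of subsets of the product on coordinate `α`. -/
def trace (α : T) (P : Set (Set (∀ β, Xf β))) : Set (Set (Xf α)) :=
  (fun s => eval α '' s) '' P

lemma eval_image_pi' {w : ∀ α, Set (Xf α)} (hne : ∀ α, (w α).Nonempty) (α : T) :
    eval α '' (univ.pi w) = w α :=
  Set.eval_image_univ_pi (Set.univ_pi_nonempty_iff.2 hne)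

lemma isBox_pi {w : ∀ α, Set (Xf α)} (hop : ∀ α, IsOpen (w α))
    (hne : ∀ α, (w α).Nonempty) (hfin : {α | w α ≠ univ}.Finite) :
    IsBox (univ.pi w) := by
  have he : ∀ α, eval α '' (univ.pi w) = w α := eval_image_pi' hne
  refine ⟨fun α => by rw [he α]; exact ⟨hop α, hne α⟩, ?_, ?_⟩
  · have : {α | eval α '' (univ.pi w) ≠ univ} = {α | w α ≠ univ} := by
      ext α; simp [he α]
    rw [this]; exact hfin
  · refine subset_antisymm ?_ ?_ <;> intro x hx <;> intro α hα
    · show x α ∈ eval α '' (univ.pi w)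
      rw [he α]; exact hx α hα
    · have : x α ∈ eval α '' (univ.pi w) := hx α hα
      rwa [he α] at this
  
lemma isBox_univ [∀ α, Nonempty (Xf α)] : IsBox (univ : Set (∀ α, Xf α)) := by
  have : (univ : Set (∀ α, Xf α)) = univ.pi fun α => (univ : Set (Xf α)) := by
    simp
  rw [this]
  exact isBox_pi (fun _ => isOpen_univ) (fun _ => univ_nonempty) (by simp)

lemma IsBox.isOpen {s : Set (∀ α, Xf α)} (hs : IsBox s) : IsOpen s := by
  obtain ⟨hcomp, hfin, hrep⟩ := hs
  rw [hrep]
  have : univ.pi (fun α => eval α '' s) =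
      ({α | eval α '' s ≠ univ} : Set T).pi (fun α => eval α '' s) := by
    refine subset_antisymm (fun x hx α _ => hx α trivial) (fun x hx α _ => ?_)
    by_cases h : eval α '' s = univ
    · dsimp only; rw [h]; trivial
    · exact hx α h
  rw [this]
  exact isOpen_set_pi hfin fun α _ => (hcomp α).1

lemma IsBox.nonempty {s : Set (∀ α, Xf α)} (hs : IsBox s) : s.Nonempty := by
  rw [hs.2.2]
  exact Set.univ_pi_nonempty_iff.2 fun α => (hs.1 α).2

/-- Every nonempty open subset of the product contains a box. -/
lemma exists_box_subset [∀ α, Nonempty (Xf α)] {V : Set (∀ α, Xf α)} (hV : IsOpen V)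
    (hne : V.Nonempty) : ∃ b, IsBox b ∧ b ⊆ V := by
  obtain ⟨x, hx⟩ := hne
  obtain ⟨I, u, hu, hsub⟩ := isOpen_pi_iff.1 hV x hx
  classical
  refine ⟨univ.pi (fun α => if α ∈ I then u α else univ), isBox_pi ?_ ?_ ?_, ?_⟩
  · intro α; by_cases h : α ∈ I
    · simp only [h, if_pos]; exact (hu α h).1
    · simp [h]
  · intro α; by_cases h : α ∈ I
    · simp only [h, if_pos]; exact ⟨x α, (hu α h).2⟩
    · simp [h]
  · refine (I.finite_toSet).subset fun α hα => ?_
    by_contra h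
    rw [Finset.mem_coe] at h
    simp [h] at hα
  · refine subset_trans ?_ hsub
    intro y hy α hα
    rw [Finset.mem_coe] at hα
    have := hy α trivial
    simpa [hα] using this


variable (σf : ∀ α, List (Set (Set (Xf α))) → Set (Set (Xf α)))

/-- A family of boxes closed under recombination whose traces are closed under
the coordinate strategies. -/
def ProdClosed (P : Set (Set (∀ α, Xf α))) : Prop :=
  (∀ s ∈ P, IsBox s) ∧ (univ : Set (∀ α, Xf α)) ∈ P ∧
    (∀ α, trace α P = {univ} ∨ SClosed (σf α) (trace α P)) ∧
    ∀ w : ∀ α, Set (Xf α), (∀ α, w α ∈ trace α P) → {α | w α ≠ univ}.Finite →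
      univ.pi w ∈ P

lemma trace_mono {α : T} {P Q : Set (Set (∀ β, Xf β))} (h : P ⊆ Q) :
    trace α P ⊆ trace α Q := image_mono h

lemma trace_iUnion {α : T} {P : ℕ → Set (Set (∀ β, Xf β))} :
    trace α (⋃ n, P n) = ⋃ n, trace α (P n) := image_iUnion

lemma mem_trace {α : T} {P : Set (Set (∀ β, Xf β))} {s : Set (∀ β, Xf β)} (hs : s ∈ P) :
    eval α '' s ∈ trace α P := mem_image_of_mem _ hs

lemma univ_mem_trace [∀ α, Nonempty (Xf α)] {α : T} {P : Set (Set (∀ β, Xf β))}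
    (h : (univ : Set (∀ β, Xf β)) ∈ P) : (univ : Set (Xf α)) ∈ trace α P := by
  have : eval α '' (univ : Set (∀ β, Xf β)) = univ := by
    rw [image_univ, (surjective_eval α).range_eq]
  rw [← this]; exact mem_trace h

lemma trace_open_ne {α : T} {P : Set (Set (∀ β, Xf β))} (hP : ∀ s ∈ P, IsBox s) :
    ∀ u ∈ trace α P, IsOpen u ∧ u.Nonempty := by
  rintro _ ⟨s, hs, rfl⟩
  exact (hP s hs).1 α

lemma trace_countable {α : T} {P : Set (Set (∀ β, Xf β))} (hP : P.Countable) :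
    (trace α P).Countable := hP.image _

/-- Absorption of a recombination datum into a stage of a monotone union. -/
lemma recomb_absorb [∀ α, Nonempty (Xf α)] {Ps : ℕ → Set (Set (∀ α, Xf α))}
    (hm : Monotone Ps) (huniv : ∀ n, (univ : Set (∀ α, Xf α)) ∈ Ps n)
    {w : ∀ α, Set (Xf α)} (hw : ∀ α, w α ∈ trace α (⋃ n, Ps n))
    (hfin : {α | w α ≠ univ}.Finite) : ∃ N, ∀ α, w α ∈ trace α (Ps N) := by
  have : ∀ α, ∃ n, w α ∈ trace α (Ps n) := by
    intro α
    have := hw α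
    rw [trace_iUnion] at this
    exact mem_iUnion.1 this
  choose nn hnn using this
  refine ⟨hfin.toFinset.sup nn, fun α => ?_⟩
  by_cases hα : w α ≠ univ
  · exact trace_mono (hm (Finset.le_sup (f := nn) (hfin.mem_toFinset.2 hα))) (hnn α)
  · push_neg at hα
    rw [hα]
    exact univ_mem_trace (huniv _)

/-- Monotone unions of `ProdClosed` families are `ProdClosed`. -/
lemma prodClosed_iUnion [∀ α, Nonempty (Xf α)] {Ps : ℕ → Set (Set (∀ α, Xf α))}
    (hm : Monotone Ps) (h : ∀ n, ProdClosed σf (Ps n)) : ProdClosed σf (⋃ n, Ps n) := by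
  refine ⟨?_, ?_, ?_, ?_⟩
  · intro s hs
    rcases mem_iUnion.1 hs with ⟨n, hn⟩
    exact (h n).1 s hn
  · exact mem_iUnion.2 ⟨0, (h 0).2.1⟩
  · intro α
    by_cases htriv : trace α (⋃ n, Ps n) = {univ}
    · exact Or.inl htriv
    · refine Or.inr ?_
      have hne : ∃ u ∈ trace α (⋃ n, Ps n), u ≠ univ := by
        by_contra hcon
        push_neg at hcon
        apply htriv
        refine subset_antisymm (fun u hu => hcon u hu) ?_
        rintro u rfl
        exact univ_mem_trace (mem_iUnion.2 ⟨0, (h 0).2.1⟩)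
      obtain ⟨u, hu, hune⟩ := hne
      rw [trace_iUnion] at hu
      obtain ⟨m, hum⟩ := mem_iUnion.1 hu
      have hclosed : ∀ j, SClosed (σf α) (trace α (Ps (m + j))) := by
        intro j
        rcases (h (m + j)).2.2.1 α with htriv' | hcl
        · exfalso
          have : u ∈ trace α (Ps (m + j)) := trace_mono (hm (Nat.le_add_right m j)) hum
          rw [htriv'] at this
          exact hune this
        · exact hcl
      have hmono2 : Monotone fun j => trace α (Ps (m + j)) :=
        fun i j hij => trace_mono (hm (by omega))
      have : trace α (⋃ n, Ps n) = ⋃ j, trace α (Ps (m + j)) := by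
        rw [trace_iUnion]
        refine subset_antisymm (iUnion_subset fun n => ?_) (iUnion_subset fun j => ?_)
        · exact subset_trans (trace_mono (hm (by omega : n ≤ m + n)))
            (subset_iUnion (fun j => trace α (Ps (m + j))) n)
        · exact subset_iUnion (fun n => trace α (Ps n)) (m + j)
      rw [this]
      exact sClosed_iUnion hmono2 hclosed
  · intro w hw hfin
    obtain ⟨N, hN⟩ := recomb_absorb hm (fun n => (h n).2.1) hw hfin
    exact mem_iUnion.2 ⟨N, (h N).2.2.2 w hN hfin⟩



section Reflect
variable [∀ α, Nonempty (Xf α)]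

/-- Reflection for products: a `ProdClosed` family reflects every nonempty open set. -/
lemma prodClosed_reflect
    (hmove : ∀ α hist, IMove (Xf α) (σf α hist))
    (hwin : ∀ α, ∀ B : ℕ → Set (Set (Xf α)),
      (∀ n, IIMove (Xf α) (σf α ((List.range n).map B)) (B n)) →
      ∀ k, Dense (⋃ (n : ℕ) (_ : k ≤ n), ⋃₀ B n))
    {P : Set (Set (∀ α, Xf α))} (hP : ProdClosed σf P)
    {V : Set (∀ α, Xf α)} (hV : IsOpen V) (hne : V.Nonempty) :
    ∃ W ∈ P, ∀ U ∈ P, U ⊆ W → (U ∩ V).Nonempty := by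
  classical
  obtain ⟨x, hx⟩ := hne
  obtain ⟨I, u, hu, hsub⟩ := isOpen_pi_iff.1 hV x hx
  set v : ∀ α, Set (Xf α) := fun α => if α ∈ I then u α else univ with hv
  have hvop : ∀ α, IsOpen (v α) := by
    intro α; by_cases h : α ∈ I
    · simp only [hv, h, if_pos]; exact (hu α h).1
    · simp [hv, h]
  have hvne : ∀ α, (v α).Nonempty := by
    intro α; by_cases h : α ∈ I
    · simp only [hv, h, if_pos]; exact ⟨x α, (hu α h).2⟩
    · simp [hv, h]
  have hvsub : univ.pi v ⊆ V := by
    refine subset_trans ?_ hsub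
    intro y hy α hα
    rw [Finset.mem_coe] at hα
    have := hy α trivial
    simpa [hv, hα] using this
  -- coordinatewise reflections
  have hrefl : ∀ α, ∃ Wα ∈ trace α P, ∀ U' ∈ trace α P, U' ⊆ Wα → (U' ∩ v α).Nonempty := by
    intro α
    rcases hP.2.2.1 α with htriv | hcl
    · refine ⟨univ, by rw [htriv]; rfl, ?_⟩
      intro U' hU' _
      rw [htriv] at hU'
      rcases hU' with rfl
      rw [univ_inter]
      exact hvne α
    · exact sClosed_reflect (hmove α) (hwin α) hcl (hvop α) (hvne α)
  choose Wf hWmem hWrefl using hrefl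
  set Wc : ∀ α, Set (Xf α) := fun α => if α ∈ I then Wf α else univ with hWc
  have hWcmem : ∀ α, Wc α ∈ trace α P := by
    intro α; by_cases h : α ∈ I
    · simp only [hWc, h, if_pos]; exact hWmem α
    · simp only [hWc, h, if_neg, if_false]
      simpa using univ_mem_trace (α := α) hP.2.1
  have hWcfin : {α | Wc α ≠ univ}.Finite := by
    refine I.finite_toSet.subset fun α hα => ?_
    by_contra h
    rw [Finset.mem_coe] at h
    simp [hWc, h] at hα
  have hWcrefl : ∀ α, ∀ U' ∈ trace α P, U' ⊆ Wc α → (U' ∩ v α).Nonempty := by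
    intro α U' hU' hsub'
    by_cases h : α ∈ I
    · simp only [hWc, h, if_pos] at hsub'
      exact hWrefl α U' hU' hsub'
    · have : (v α) = univ := by simp [hv, h]
      rw [this, inter_univ]
      exact ((trace_open_ne hP.1) U' hU').2
  refine ⟨univ.pi Wc, hP.2.2.2 Wc hWcmem hWcfin, ?_⟩
  intro U hU hUW
  have hUbox := hP.1 U hU
  have hWcne : ∀ α, (Wc α).Nonempty := fun α => ((trace_open_ne hP.1) _ (hWcmem α)).2
  have hcomp : ∀ α, eval α '' U ⊆ Wc α := by
    intro α
    have := image_mono (f := eval α) hUW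
    rwa [eval_image_pi' hWcne α] at this
  have hpt : ∀ α, ((eval α '' U) ∩ v α).Nonempty := fun α =>
    hWcrefl α _ (mem_trace hU) (hcomp α)
  choose y hy1 hy2 using fun α => hpt α
  refine ⟨y, ?_, hvsub fun α _ => hy2 α⟩
  rw [hUbox.2.2]
  exact fun α _ => hy1 α
end Reflect

section Closure
variable [∀ α, Nonempty (Xf α)]

noncomputable local instance : DecidableEq T := Classical.decEq T

/-- The open cylinder over `W` at coordinate `α`. -/
noncomputable def Cyl (α : T) (W : Set (Xf α)) : Set (∀ β, Xf β) :=
  univ.pi (Function.update (fun β => (univ : Set (Xf β))) α W)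

lemma cyl_comp {α : T} {W : Set (Xf α)} (hne : W.Nonempty) :
    eval α '' Cyl α W = W := by
  have : ∀ β, (Function.update (fun γ => (univ : Set (Xf γ))) α W β).Nonempty := by
    intro β
    rcases eq_or_ne β α with rfl | h
    · rwa [Function.update_self]
    · rw [Function.update_of_ne h]; exact univ_nonempty
  rw [Cyl, eval_image_pi' this α, Function.update_self]

lemma cyl_isBox {α : T} {W : Set (Xf α)} (hop : IsOpen W) (hne : W.Nonempty) :
    IsBox (Cyl α W) := by
  refine isBox_pi ?_ ?_ ?_
  · intro β
    rcases eq_or_ne β α with rfl | h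
    · rwa [Function.update_self]
    · rw [Function.update_of_ne h]; exact isOpen_univ
  · intro β
    rcases eq_or_ne β α with rfl | h
    · rwa [Function.update_self]
    · rw [Function.update_of_ne h]; exact univ_nonempty
  · refine (Set.finite_singleton α).subset fun β hβ => ?_
    by_contra h
    rw [mem_singleton_iff] at h
    exact hβ (Function.update_of_ne h _ _)

/-- Closure of a countable family of boxes into a `ProdClosed` family. -/
lemma exists_prodClosed
    (clF : ∀ α, Set (Set (Xf α)) → Set (Set (Xf α)))
    (hclF : ∀ (α) (Q : Set (Set (Xf α))), Q.Countable → (∀ u ∈ Q, IsOpen u ∧ u.Nonempty) →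
      Q ⊆ clF α Q ∧ (clF α Q).Countable ∧ SClosed (σf α) (clF α Q))
    {P₀ : Set (Set (∀ α, Xf α))} (hc : P₀.Countable) (hbox : ∀ s ∈ P₀, IsBox s) :
    ∃ P, P₀ ⊆ P ∧ P.Countable ∧ ProdClosed σf P := by
  classical
  -- the one-step closure operator
  set R : Set (Set (∀ α, Xf α)) → Set (Set (∀ α, Xf α)) := fun P =>
    {s | ∃ w : ∀ α, Set (Xf α), (∀ α, w α ∈ trace α P ∪ {univ}) ∧
      {α | w α ≠ univ}.Finite ∧ s = univ.pi w} with hR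
  set C : Set (Set (∀ α, Xf α)) → Set (Set (∀ α, Xf α)) := fun P =>
    ⋃ α, {s | trace α P ≠ {univ} ∧ (trace α P).Nonempty ∧
      ∃ W ∈ clF α (trace α P), s = Cyl α W} with hC
  set F : Set (Set (∀ α, Xf α)) → Set (Set (∀ α, Xf α)) := fun P =>
    ((P ∪ {univ}) ∪ R P) ∪ C P with hF
  have hFsub : ∀ P, P ⊆ F P := fun P =>
    subset_union_left.trans' (subset_union_left.trans' subset_union_left)
  -- basic facts about members of R P and C P
  have hwcomp : ∀ P : Set (Set (∀ α, Xf α)), (∀ s ∈ P, IsBox s) →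
      ∀ w : ∀ α, Set (Xf α), (∀ α, w α ∈ trace α P ∪ {univ}) →
      ∀ α, IsOpen (w α) ∧ (w α).Nonempty := by
    intro P hPbox w hw α
    rcases hw α with h | h
    · exact trace_open_ne hPbox _ h
    · rw [mem_singleton_iff] at h
      rw [h]; exact ⟨isOpen_univ, univ_nonempty⟩
  have hRbox : ∀ P, (∀ s ∈ P, IsBox s) → ∀ s ∈ R P, IsBox s := by
    rintro P hPbox s ⟨w, hw, hfin, rfl⟩
    exact isBox_pi (fun α => (hwcomp P hPbox w hw α).1) (fun α => (hwcomp P hPbox w hw α).2) hfin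
  have hCbox : ∀ P, P.Countable → (∀ s ∈ P, IsBox s) → ∀ s ∈ C P, IsBox s := by
    intro P hPc hPbox s hs
    rcases mem_iUnion.1 hs with ⟨α, htriv, hne, W, hW, rfl⟩
    have := (hclF α (trace α P) (trace_countable hPc) (trace_open_ne hPbox)).2.2.1 W hW
    exact cyl_isBox this.1 this.2
  have hFbox : ∀ P, P.Countable → (∀ s ∈ P, IsBox s) → ∀ s ∈ F P, IsBox s := by
    intro P hPc hPbox s hs
    rcases hs with ((hs | hs) | hs) | hs
    · exact hPbox s hs
    · rw [mem_singleton_iff] at hs; rw [hs]; exact isBox_univ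
    · exact hRbox P hPbox s hs
    · exact hCbox P hPc hPbox s hs
  -- countability of R P
  have hRc : ∀ P, P.Countable → (∀ s ∈ P, IsBox s) → (R P).Countable := by
    intro P hPc hPbox
    set D : Set (Σ α, Set (Xf α)) := {q | q.2 ∈ trace q.1 P ∧ q.2 ≠ univ} with hD
    have hDc : D.Countable := by
      have : D ⊆ ⋃ s ∈ P, (fun α => (⟨α, eval α '' s⟩ : Σ α, Set (Xf α))) ''
          {α | eval α '' s ≠ univ} := by
        rintro q ⟨⟨s, hs, hW⟩, hne⟩
        have hW' : eval q.1 '' s = q.2 := hW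
        refine mem_biUnion hs ⟨q.1, ?_, ?_⟩
        · show eval q.1 '' s ≠ univ
          rw [hW']; exact hne
        show (⟨q.1, eval q.1 '' s⟩ : Σ α, Set (Xf α)) = q
        rw [hW']
      refine Set.Countable.mono this ?_
      exact Set.Countable.biUnion hPc fun s hs => ((hPbox s hs).2.1.image _).countable
    set g : Set (∀ α, Xf α) → Set (Σ α, Set (Xf α)) := fun s =>
      {q | eval q.1 '' s ≠ univ ∧ q.2 = eval q.1 '' s} with hg
    have hcomp : ∀ s ∈ R P, ∀ α, IsOpen (eval α '' s) ∧ (eval α '' s).Nonempty ∧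
        eval α '' s ∈ trace α P ∪ {univ} := by
      rintro s ⟨w, hw, hfin, rfl⟩ α
      have he : eval α '' (univ.pi w) = w α :=
        eval_image_pi' (fun β => (hwcomp P hPbox w hw β).2) α
      rw [he]
      exact ⟨(hwcomp P hPbox w hw α).1, (hwcomp P hPbox w hw α).2, hw α⟩
    have hgfin : ∀ s ∈ R P, (g s).Finite ∧ g s ⊆ D := by
      intro s hs
      constructor
      · have : g s ⊆ (fun α => (⟨α, eval α '' s⟩ : Σ α, Set (Xf α))) ''
            {α | eval α '' s ≠ univ} := by
          rintro q ⟨h1, h2⟩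
          refine ⟨q.1, h1, ?_⟩
          show (⟨q.1, eval q.1 '' s⟩ : Σ α, Set (Xf α)) = q
          rw [← h2]
        exact (((hRbox P hPbox s hs).2.1).image _).subset this
      · rintro q ⟨h1, h2⟩
        refine ⟨?_, ?_⟩
        · rcases (hcomp s hs q.1).2.2 with h | h
          · rw [h2]; exact h
          · rw [mem_singleton_iff] at h
            exact absurd h h1
        · rw [h2]; exact h1
    have hinj : Set.InjOn g (R P) := by
      intro s hs s' hs' hgs
      have hkey : ∀ α, eval α '' s = eval α '' s' := by
        intro α
        by_cases h1 : eval α '' s = univ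
        · by_cases h2 : eval α '' s' = univ
          · rw [h1, h2]
          · have : (⟨α, eval α '' s'⟩ : Σ α, Set (Xf α)) ∈ g s' := ⟨h2, rfl⟩
            rw [← hgs] at this
            exact absurd this.1 (by rw [h1]; simp)
        · have : (⟨α, eval α '' s⟩ : Σ α, Set (Xf α)) ∈ g s := ⟨h1, rfl⟩
          rw [hgs] at this
          exact this.2
      have hb := (hRbox P hPbox s hs).2.2
      have hb' := (hRbox P hPbox s' hs').2.2
      rw [hb, hb']
      have : (fun α => eval α '' s) = (fun α => eval α '' s') := funext hkey
      rw [this]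
    refine Set.countable_of_injective_of_countable_image hinj ?_
    refine Set.Countable.mono ?_ (Set.countable_setOf_finite_subset hDc)
    rintro _ ⟨s, hs, rfl⟩
    exact ⟨(hgfin s hs).1, (hgfin s hs).2⟩
  -- countability of C P
  have hCc : ∀ P, P.Countable → (∀ s ∈ P, IsBox s) → (C P).Countable := by
    intro P hPc hPbox
    have hsub : C P ⊆ ⋃ α ∈ ⋃ s ∈ P, {β | eval β '' s ≠ univ},
        Cyl α '' clF α (trace α P) := by
      intro s hs
      rcases mem_iUnion.1 hs with ⟨α, htriv, hne, W, hW, rfl⟩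
      have : ∃ u ∈ trace α P, u ≠ univ := by
        by_contra hcon
        push_neg at hcon
        refine htriv (subset_antisymm (fun u hu => hcon u hu) ?_)
        rintro u rfl
        obtain ⟨u', hu'⟩ := hne
        have := hcon u' hu'
        rwa [← this]
      obtain ⟨u, ⟨s', hs', hus'⟩, hune⟩ := this
      refine mem_biUnion (mem_biUnion hs' ?_) ⟨W, hW, rfl⟩
      show eval α '' s' ≠ univ
      intro hcon
      exact hune (by rw [← hus']; exact hcon)
    refine Set.Countable.mono hsub ?_
    refine Set.Countable.biUnion ?_ fun α _ =>
      ((hclF α (trace α P) (trace_countable hPc) (trace_open_ne hPbox)).2.1).image _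
    exact Set.Countable.biUnion hPc fun s hs => ((hPbox s hs).2.1).countable
  have hFc : ∀ P, P.Countable → (∀ s ∈ P, IsBox s) → (F P).Countable := by
    intro P hPc hPbox
    refine (((hPc.union (countable_singleton _)).union (hRc P hPc hPbox)).union
      (hCc P hPc hPbox))
  -- iterate
  have hstageC : ∀ n, (F^[n] P₀).Countable ∧ ∀ s ∈ F^[n] P₀, IsBox s := by
    intro n
    induction n with
    | zero => exact ⟨hc, hbox⟩
    | succ n ih =>
      rw [Function.iterate_succ_apply']
      exact ⟨hFc _ ih.1 ih.2, hFbox _ ih.1 ih.2⟩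
  have hmono : Monotone (fun n => F^[n] P₀) := by
    refine monotone_nat_of_le_succ fun n => ?_
    rw [Function.iterate_succ_apply']
    exact hFsub _
  have huniv1 : ∀ n, (univ : Set (∀ α, Xf α)) ∈ F^[n + 1] P₀ := by
    intro n
    rw [Function.iterate_succ_apply']
    exact subset_union_left (subset_union_left (mem_union_right _ rfl))
  set PΩ := ⋃ n, F^[n] P₀ with hPΩ
  have hPΩeq : PΩ = ⋃ n, F^[n + 1] P₀ := by
    refine subset_antisymm (iUnion_subset fun n => ?_) (iUnion_subset fun n => ?_)
    · exact (hmono (Nat.le_succ n)).trans (subset_iUnion (fun n => F^[n + 1] P₀) n)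
    · exact subset_iUnion (fun n => F^[n] P₀) (n + 1)
  have hmono1 : Monotone (fun n => F^[n + 1] P₀) := fun i j hij => hmono (by omega)
  have hPΩbox : ∀ s ∈ PΩ, IsBox s := by
    intro s hs
    rcases mem_iUnion.1 hs with ⟨n, hn⟩
    exact (hstageC n).2 s hn
  refine ⟨PΩ, subset_iUnion (fun n => F^[n] P₀) 0, countable_iUnion fun n => (hstageC n).1,
    hPΩbox, ?_, ?_, ?_⟩
  · rw [hPΩeq]
    exact mem_iUnion.2 ⟨0, huniv1 0⟩
  · -- trace condition
    intro α
    by_cases htriv : trace α PΩ = {univ}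
    · exact Or.inl htriv
    refine Or.inr ?_
    have hunivt : (univ : Set (Xf α)) ∈ trace α PΩ := by
      rw [hPΩeq]
      exact univ_mem_trace (mem_iUnion.2 ⟨0, huniv1 0⟩)
    have : ∃ u ∈ trace α PΩ, u ≠ univ := by
      by_contra hcon
      push_neg at hcon
      refine htriv (subset_antisymm (fun u hu => hcon u hu) ?_)
      rintro u rfl
      exact hunivt
    obtain ⟨u, hu, hune⟩ := this
    rw [hPΩeq, trace_iUnion] at hu
    obtain ⟨m, hum⟩ := mem_iUnion.1 hu
    -- traces of the stages from m+1 on are nontrivial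
    have hkey : ∀ j, clF α (trace α (F^[m + 1 + j] P₀)) ⊆ trace α (F^[m + 1 + j + 1] P₀) := by
      intro j
      intro W hW
      have hWop := ((hclF α (trace α (F^[m + 1 + j] P₀)) (trace_countable (hstageC _).1)
        (trace_open_ne (hstageC _).2)).2.2.1) W hW
      have hCylmem : Cyl α W ∈ F^[m + 1 + j + 1] P₀ := by
        rw [Function.iterate_succ_apply']
        refine mem_union_right _ ?_
        refine mem_iUnion.2 ⟨α, ?_, ?_, W, hW, rfl⟩
        · intro hcon
          have := trace_mono (hmono (by omega : m + 1 ≤ m + 1 + j)) hum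
          rw [hcon] at this
          exact hune this
        · exact ⟨u, trace_mono (hmono (by omega : m + 1 ≤ m + 1 + j)) hum⟩
      have : eval α '' Cyl α W = W := cyl_comp hWop.2
      rw [← this]
      exact mem_trace hCylmem
    have htraceeq : trace α PΩ = ⋃ j, clF α (trace α (F^[m + 1 + j] P₀)) := by
      rw [hPΩeq, trace_iUnion]
      refine subset_antisymm (iUnion_subset fun n => ?_) (iUnion_subset fun j => ?_)
      · refine subset_trans (trace_mono (hmono (by omega : n + 1 ≤ m + 1 + n))) ?_
        refine subset_trans ((hclF α (trace α (F^[m + 1 + n] P₀))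
          (trace_countable (hstageC _).1) (trace_open_ne (hstageC _).2)).1) ?_
        exact subset_iUnion (fun j => clF α (trace α (F^[m + 1 + j] P₀))) n
      · refine subset_trans (hkey j) ?_
        refine subset_trans (trace_mono ?_) (subset_iUnion
          (fun n => trace α (F^[n + 1] P₀)) (m + 1 + j))
        exact hmono (by omega)
    rw [htraceeq]
    refine sClosed_iUnion ?_ ?_
    · intro i j hij
      rcases eq_or_lt_of_le hij with rfl | hlt
      · exact le_refl _
      refine subset_trans (hkey i) ?_
      refine subset_trans (trace_mono (hmono (by omega : m + 1 + i + 1 ≤ m + 1 + j))) ?_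
      exact (hclF α (trace α (F^[m + 1 + j] P₀)) (trace_countable (hstageC _).1)
        (trace_open_ne (hstageC _).2)).1
    · intro j
      exact (hclF α (trace α (F^[m + 1 + j] P₀)) (trace_countable (hstageC _).1)
        (trace_open_ne (hstageC _).2)).2.2
  · -- recombination
    intro w hw hfin
    have hw' : ∀ β, w β ∈ trace β (⋃ n, F^[n + 1] P₀) := by
      intro β
      have := hw β
      rwa [hPΩeq] at this
    obtain ⟨N, hN⟩ := recomb_absorb hmono1 huniv1 hw' hfin
    have : univ.pi w ∈ F^[N + 1 + 1] P₀ := by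
      rw [Function.iterate_succ_apply']
      refine subset_union_left (mem_union_right _ ?_)
      exact ⟨w, fun β => mem_union_left _ (hN β), hfin, rfl⟩
    rw [hPΩeq]
    exact mem_iUnion.2 ⟨N + 1, this⟩

end Closure
end Product


/-- Any product of I-favorable spaces is I-favorable. -/
theorem iFavorable_pi {T : Type*} (Xf : T → Type*)
    [∀ α, TopologicalSpace (Xf α)] (h : ∀ α, IFavorable (Xf α)) :
    IFavorable (∀ α, Xf α) := by

  classical
  by_cases hNE : ∀ α, Nonempty (Xf α)
  case neg =>
    -- the product is empty; the empty strategy wins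
    have hXe : IsEmpty (∀ α, Xf α) := by
      push_neg at hNE
      obtain ⟨α, hα⟩ := hNE
      exact ⟨fun x => hα.false (x α)⟩
    refine ⟨fun _ => ∅, fun _ => ⟨finite_empty, by simp⟩, ?_⟩
    intro B hB k
    intro x
    exact (hXe.false x).elim
  case pos =>
    haveI := hNE
    set Xp := ∀ α, Xf α with hXp
    -- the coordinate strategies
    choose σf hσmove hσwin using h
    -- coordinatewise closure operators
    have hclex : ∀ (α) (Q : Set (Set (Xf α))), ∃ Q',
        Q.Countable → (∀ u ∈ Q, IsOpen u ∧ u.Nonempty) →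
        Q ⊆ Q' ∧ Q'.Countable ∧ SClosed (σf α) Q' := by
      intro α Q
      by_cases hq : Q.Countable ∧ ∀ u ∈ Q, IsOpen u ∧ u.Nonempty
      · obtain ⟨Q', h1, h2, h3⟩ := exists_sClosed (σf α) (hσmove α) hq.1 hq.2
        exact ⟨Q', fun _ _ => ⟨h1, h2, h3⟩⟩
      · exact ⟨Q, fun h1 h2 => absurd ⟨h1, h2⟩ hq⟩
    choose clF hclF using hclex
    have hclF' : ∀ (α) (Q : Set (Set (Xf α))), Q.Countable →
        (∀ u ∈ Q, IsOpen u ∧ u.Nonempty) →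
        Q ⊆ clF α Q ∧ (clF α Q).Countable ∧ SClosed (σf α) (clF α Q) :=
      fun α Q h1 h2 => hclF α Q h1 h2
    -- box selection
    have hpickex : ∀ V : Set Xp, ∃ b, IsBox b ∧ (IsOpen V → V.Nonempty → b ⊆ V) := by
      intro V
      by_cases hv : IsOpen V ∧ V.Nonempty
      · obtain ⟨b, hb1, hb2⟩ := exists_box_subset hv.1 hv.2
        exact ⟨b, hb1, fun _ _ => hb2⟩
      · exact ⟨univ, isBox_univ, fun h1 h2 => absurd ⟨h1, h2⟩ hv⟩
    choose pickBox hpick1 hpick2 using hpickex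
    -- enumeration of the refined families
    have hfEex : ∀ Bf : Set (Set Xp), ∃ f : ℕ → Set Xp,
        (∀ i, IsBox (f i)) ∧ (Bf.Finite → range f = pickBox '' Bf ∪ {univ}) := by
      intro Bf
      by_cases hb : Bf.Finite
      · have hc : (pickBox '' Bf ∪ {univ}).Countable :=
          ((hb.image pickBox).countable).union (countable_singleton _)
        obtain ⟨f, hf⟩ := hc.exists_eq_range ⟨univ, Or.inr rfl⟩
        refine ⟨f, ?_, fun _ => hf.symm⟩
        intro i
        have : f i ∈ pickBox '' Bf ∪ {univ} := by rw [hf]; exact mem_range_self i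
        rcases this with ⟨V, -, hV⟩ | hh
        · rw [← hV]; exact hpick1 V
        · rw [mem_singleton_iff] at hh; rw [hh]; exact isBox_univ
      · exact ⟨fun _ => univ, fun _ => isBox_univ, fun hh => absurd hh hb⟩
    choose fE hfE1 hfE2 using hfEex
    -- the closing-off operator
    have hclose : ∀ u : ℕ → Set Xp, ∃ v : ℕ → Set Xp, (∀ i, IsBox (u i)) →
        (∀ i, v (2 * i) = u i) ∧ (∀ i, IsBox (v i)) ∧ ProdClosed σf (range v) ∧
        range u ⊆ range v := by
      intro u
      by_cases hu : ∀ i, IsBox (u i)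
      · obtain ⟨P, hsub, hPc, hPcl⟩ := exists_prodClosed σf clF hclF'
          (countable_range u) (by rintro _ ⟨i, rfl⟩; exact hu i)
        obtain ⟨w, hw⟩ := hPc.exists_eq_range ⟨u 0, hsub (mem_range_self 0)⟩
        refine ⟨il u w, fun _ => ⟨il_even u w, ?_, ?_, ?_⟩⟩
        · intro i
          have : il u w i ∈ range (il u w) := mem_range_self i
          rw [range_il] at this
          rcases this with ⟨j, hj⟩ | hh
          · rw [← hj]; exact hu j
          · exact hPcl.1 _ (by rw [hw]; exact hh)
        · have : range (il u w) = P := by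
            rw [range_il, ← hw]
            exact union_eq_self_of_subset_left hsub
          rw [this]; exact hPcl
        · rw [range_il]; exact subset_union_left
      · exact ⟨u, fun hh => absurd hh hu⟩
    choose cl hcl using hclose
    -- the strategy
    set step : (ℕ → Set Xp) → Set (Set Xp) → (ℕ → Set Xp) :=
      fun u Bf => cl (il u (fE Bf)) with hstep
    set u₀ : ℕ → Set Xp := cl (fun _ => univ) with hu₀
    set stat : List (Set (Set Xp)) → (ℕ → Set Xp) :=
      fun hist => hist.foldl step u₀ with hstat
    set σ : List (Set (Set Xp)) → Set (Set Xp) :=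
      fun hist => (stat hist) '' {i | i ≤ hist.length * 4 ^ hist.length} with hσ
    -- invariants
    have hu₀box : ∀ i, IsBox (u₀ i) :=
      (hcl (fun _ => univ) (fun _ => isBox_univ)).2.1
    have hstepbox : ∀ (u : ℕ → Set Xp) (Bf : Set (Set Xp)), (∀ i, IsBox (u i)) →
        ∀ i, IsBox (step u Bf i) := by
      intro u Bf hu
      have hil : ∀ i, IsBox (il u (fE Bf) i) := by
        intro i
        have : il u (fE Bf) i ∈ range (il u (fE Bf)) := mem_range_self i
        rw [range_il] at this
        rcases this with ⟨j, hj⟩ | ⟨j, hj⟩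
        · rw [← hj]; exact hu j
        · rw [← hj]; exact hfE1 Bf j
      exact (hcl _ hil).2.1
    have hstatbox : ∀ hist, ∀ i, IsBox (stat hist i) := by
      intro hist
      have : ∀ (l : List (Set (Set Xp))) (u : ℕ → Set Xp), (∀ i, IsBox (u i)) →
          ∀ i, IsBox (l.foldl step u i) := by
        intro l
        induction l with
        | nil => exact fun u hu => hu
        | cons a l ih => exact fun u hu => ih (step u a) (hstepbox u a hu)
      exact this hist u₀ hu₀box
    refine ⟨σ, ?_, ?_⟩
    · -- the strategy plays valid moves
      intro hist
      refine ⟨(Set.finite_Iic _).image _, ?_⟩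
      rintro _ ⟨i, _, rfl⟩
      exact ⟨(hstatbox hist i).isOpen, (hstatbox hist i).nonempty⟩
    -- the strategy wins
    intro B hB k
    set un : ℕ → ℕ → Set Xp := fun n => stat ((List.range n).map B) with hun
    have hsucc : ∀ n, un (n + 1) = step (un n) (B n) := by
      intro n
      show stat ((List.range (n + 1)).map B) = _
      rw [List.range_succ, List.map_append]
      simp [hstat]
      rfl
    have hunbox : ∀ n i, IsBox (un n i) := fun n => hstatbox _
    have hBmove : ∀ n, IMove Xp (B n) := fun n => (hB n).1
    have hProdC : ∀ n, ProdClosed σf (range (un n)) := by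
      intro n
      induction n with
      | zero => exact (hcl (fun _ => univ) (fun _ => isBox_univ)).2.2.1
      | succ n ih =>
        rw [hsucc n]
        have hil : ∀ i, IsBox (il (un n) (fE (B n)) i) := by
          intro i
          have : il (un n) (fE (B n)) i ∈ range (il (un n) (fE (B n))) := mem_range_self i
          rw [range_il] at this
          rcases this with ⟨j, hj⟩ | ⟨j, hj⟩
          · rw [← hj]; exact hunbox n j
          · rw [← hj]; exact hfE1 (B n) j
        exact (hcl _ hil).2.2.1
    have hmonor : ∀ n, range (un n) ⊆ range (un (n + 1)) := by
      intro n
      rw [hsucc n]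
      have hil : ∀ i, IsBox (il (un n) (fE (B n)) i) := by
        intro i
        have : il (un n) (fE (B n)) i ∈ range (il (un n) (fE (B n))) := mem_range_self i
        rw [range_il] at this
        rcases this with ⟨j, hj⟩ | ⟨j, hj⟩
        · rw [← hj]; exact hunbox n j
        · rw [← hj]; exact hfE1 (B n) j
      refine subset_trans ?_ (hcl _ hil).2.2.2
      rw [range_il]
      exact subset_union_left
    have hmono : Monotone (fun n => range (un n)) := monotone_nat_of_le_succ hmonor
    have hPΩ : ProdClosed σf (⋃ n, range (un n)) := prodClosed_iUnion σf hmono hProdC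
    -- index stability
    have hidx : ∀ n i, un (n + 1) (4 * i) = un n i := by
      intro n i
      rw [hsucc n]
      have hil : ∀ i, IsBox (il (un n) (fE (B n)) i) := by
        intro i
        have : il (un n) (fE (B n)) i ∈ range (il (un n) (fE (B n))) := mem_range_self i
        rw [range_il] at this
        rcases this with ⟨j, hj⟩ | ⟨j, hj⟩
        · rw [← hj]; exact hunbox n j
        · rw [← hj]; exact hfE1 (B n) j
      have h1 := (hcl _ hil).1 (2 * i)
      rw [show 4 * i = 2 * (2 * i) by ring]
      show cl (il (un n) (fE (B n))) (2 * (2 * i)) = un n i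
      rw [h1, il_even]
    have hidx' : ∀ m n, m ≤ n → ∀ i, un n (4 ^ (n - m) * i) = un m i := by
      intro m n hmn
      induction n with
      | zero =>
        intro i
        have : m = 0 := by omega
        subst this
        simp
      | succ n ih =>
        intro i
        rcases Nat.lt_or_ge m (n + 1) with hlt | hge
        · have hmn' : m ≤ n := by omega
          have : n + 1 - m = (n - m) + 1 := by omega
          rw [this, pow_succ, mul_comm (4 ^ (n - m)) 4, mul_assoc, hidx n, ih hmn']
        · have : m = n + 1 := by omega
          subst this
          simp
    -- density
    rw [dense_iff_inter_open]
    intro V hV hVne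
    obtain ⟨W, hWmem, hWrefl⟩ := prodClosed_reflect σf hσmove hσwin hPΩ hV hVne
    rcases mem_iUnion.1 hWmem with ⟨m, hWm⟩
    obtain ⟨j, hj⟩ := hWm
    set n := max (max m j) (max k 1) with hn
    have hmn : m ≤ n := le_trans (le_max_left m j) (le_max_left _ _)
    have hjn : j ≤ n := le_trans (le_max_right m j) (le_max_left _ _)
    have hkn : k ≤ n := le_trans (le_max_left k 1) (le_max_right _ _)
    -- W is played at stage n
    have hWplayed : W ∈ σ ((List.range n).map B) := by
      have hidxle : 4 ^ (n - m) * j ≤ n * 4 ^ n := by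
        calc 4 ^ (n - m) * j ≤ 4 ^ (n - m) * (4 ^ m * n) :=
              Nat.mul_le_mul_left _ (hjn.trans (Nat.le_mul_of_pos_left n (by positivity)))
          _ = n * 4 ^ n := by rw [← mul_assoc, ← pow_add, Nat.sub_add_cancel hmn, mul_comm]
      refine ⟨4 ^ (n - m) * j, ?_, ?_⟩
      · simpa using hidxle
      · show un n (4 ^ (n - m) * j) = W
        rw [hidx' m n hmn j, hj]
    obtain ⟨Vw, hVwB, hVwW⟩ := (hB n).2 W hWplayed
    have hVwprops := hBmove n |>.2 Vw hVwB
    -- the box picked inside Vw is in the closed family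
    have hUmem : pickBox Vw ∈ ⋃ n, range (un n) := by
      refine mem_iUnion.2 ⟨n + 1, ?_⟩
      rw [hsucc n]
      have hil : ∀ i, IsBox (il (un n) (fE (B n)) i) := by
        intro i
        have : il (un n) (fE (B n)) i ∈ range (il (un n) (fE (B n))) := mem_range_self i
        rw [range_il] at this
        rcases this with ⟨j', hj'⟩ | ⟨j', hj'⟩
        · rw [← hj']; exact hunbox n j'
        · rw [← hj']; exact hfE1 (B n) j'
      refine (hcl _ hil).2.2.2 ?_
      rw [range_il]
      refine Or.inr ?_
      rw [hfE2 (B n) (hBmove n).1]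
      exact Or.inl ⟨Vw, hVwB, rfl⟩
    have hUsub : pickBox Vw ⊆ W :=
      (hpick2 Vw hVwprops.1 hVwprops.2).trans hVwW
    obtain ⟨x, hxU, hxV⟩ := hWrefl (pickBox Vw) hUmem hUsub
    refine ⟨x, hxV, ?_⟩
    refine mem_iUnion.2 ⟨n, mem_iUnion.2 ⟨hkn, ?_⟩⟩
    exact ⟨Vw, hVwB, hpick2 Vw hVwprops.1 hVwprops.2 hxU⟩
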